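/- arXiv:math/0604272 — 2 statements merged into one kernel-verified Lean document; each statement's English description precedes it below -/
import Mathlib

section
/- Let G be a group, N ⊴ G a normal subgroup, and define the weight filtration W¹G = G, W²G = N·[G,G], W^{k+1}G = [G, WᵏG]·[N, W^{k-1}G] for k ≥ 2. Then W^{2k-1}G ≤ γₖ(G) ≤ WᵏG for all k ≥ 1, where γₖ(G) is the lower central series of G. In particular the weight filtration and the lower central series are cofinal. -/
/-- The weight filtration associated to a normal subgroup `N ⊴ G`:
`W¹G = G`, `W²G = N·[G,G]`, `W^{k+1}G = [G, WᵏG]·[N, W^{k-1}G]`.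
Here `weightFiltration N k` is `W^{k+1}G` (0-based indexing). -/
def weightFiltration {G : Type*} [Group G] (N : Subgroup G) : ℕ → Subgroup G
  | 0 => ⊤
  | 1 => N ⊔ commutator G
  | (k + 2) => ⁅(⊤ : Subgroup G), weightFiltration N (k + 1)⁆ ⊔ ⁅N, weightFiltration N k⁆

lemma lcs_le_weightFiltration {G : Type*} [Group G] (N : Subgroup G) :
    ∀ k : ℕ, Subgroup.lowerCentralSeries (⊤ : Subgroup G) k ≤ weightFiltration N k := by
  intro k
  induction k with
  | zero => simp [weightFiltration]
  | succ k ih =>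
    have h1 : Subgroup.lowerCentralSeries (⊤ : Subgroup G) (k + 1) = ⁅Subgroup.lowerCentralSeries (⊤ : Subgroup G) k, (⊤ : Subgroup G)⁆ :=
      rfl
    rw [h1, Subgroup.commutator_comm]
    match k, ih with
    | 0, _ =>
      show ⁅(⊤ : Subgroup G), ⊤⁆ ≤ N ⊔ commutator G
      exact le_sup_right
    | (j + 1), ih =>
      calc ⁅(⊤ : Subgroup G), Subgroup.lowerCentralSeries (⊤ : Subgroup G) (j + 1)⁆
          ≤ ⁅(⊤ : Subgroup G), weightFiltration N (j + 1)⁆ :=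
            Subgroup.commutator_mono le_rfl ih
        _ ≤ weightFiltration N (j + 2) := le_sup_left

lemma weightFiltration_le_lcs {G : Type*} [Group G] (N : Subgroup G) :
    ∀ m : ℕ, weightFiltration N m ≤ Subgroup.lowerCentralSeries (⊤ : Subgroup G) (m / 2) := by
  intro m
  induction m using Nat.strong_induction_on with
  | _ m ih =>
    match m with
    | 0 => simp
    | 1 => simp [Nat.div_eq_of_lt]
    | (k + 2) =>
      have h1 := ih (k + 1) (by omega)
      have h0 := ih k (by omega)
      show ⁅(⊤ : Subgroup G), weightFiltration N (k + 1)⁆ ⊔ ⁅N, weightFiltration N k⁆ ≤ _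
      apply sup_le
      · calc ⁅(⊤ : Subgroup G), weightFiltration N (k + 1)⁆
            ≤ ⁅(⊤ : Subgroup G), Subgroup.lowerCentralSeries (⊤ : Subgroup G) ((k + 1) / 2)⁆ :=
              Subgroup.commutator_mono le_rfl h1
          _ = ⁅Subgroup.lowerCentralSeries (⊤ : Subgroup G) ((k + 1) / 2), (⊤ : Subgroup G)⁆ :=
              Subgroup.commutator_comm _ _
          _ = Subgroup.lowerCentralSeries (⊤ : Subgroup G) ((k + 1) / 2 + 1) := rfl
          _ ≤ Subgroup.lowerCentralSeries (⊤ : Subgroup G) ((k + 2) / 2) :=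
              Subgroup.lowerCentralSeries_antitone ⊤ (by omega)
      · calc ⁅N, weightFiltration N k⁆
            ≤ ⁅(⊤ : Subgroup G), Subgroup.lowerCentralSeries (⊤ : Subgroup G) (k / 2)⁆ :=
              Subgroup.commutator_mono le_top h0
          _ = ⁅Subgroup.lowerCentralSeries (⊤ : Subgroup G) (k / 2), (⊤ : Subgroup G)⁆ :=
              Subgroup.commutator_comm _ _
          _ = Subgroup.lowerCentralSeries (⊤ : Subgroup G) (k / 2 + 1) := rfl
          _ ≤ Subgroup.lowerCentralSeries (⊤ : Subgroup G) ((k + 2) / 2) :=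
              Subgroup.lowerCentralSeries_antitone ⊤ (by omega)

/-- `W^{2k-1}G ≤ γₖ(G) ≤ WᵏG` for all `k ≥ 1`, i.e. the weight
filtration and the lower central series are cofinal. With 0-based indexing
(`γ_{k+1}(G) = Subgroup.lowerCentralSeries (⊤ : Subgroup G) k`, `W^{k+1}G = weightFiltration N k`),
this reads `weightFiltration N (2k) ≤ Subgroup.lowerCentralSeries (⊤ : Subgroup G) k ≤ weightFiltration N k`. -/
theorem weightFiltration_cofinal_lowerCentralSeries {G : Type*} [Group G]
    (N : Subgroup G) (hN : N.Normal) :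
    ∀ k : ℕ, weightFiltration N (2 * k) ≤ Subgroup.lowerCentralSeries (⊤ : Subgroup G) k ∧
      Subgroup.lowerCentralSeries (⊤ : Subgroup G) k ≤ weightFiltration N k := by
  intro k
  refine ⟨?_, lcs_le_weightFiltration N k⟩
  have := weightFiltration_le_lcs N (2 * k)
  simpa [Nat.mul_div_cancel_left k (by norm_num : 0 < 2)] using this
end

section
/- Let G be a group with normal subgroup N and weight filtration defined by W¹G = G, W²G = N·[G,G], W^{k+1}G = [G, WᵏG]·[N, W^{k-1}G]. Then [WˢG, WᵗG] ≤ W^{s+t}G for all s, t ≥ 1. -/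
section Aux

open Subgroup

variable {G : Type*} [Group G]

/-- Reduce a commutator inequality to a triviality in the quotient. -/
lemma commutator_le_iff_map_bot {A B K : Subgroup G} [K.Normal] :
    ⁅A, B⁆ ≤ K ↔ ⁅A.map (QuotientGroup.mk' K), B.map (QuotientGroup.mk' K)⁆ = ⊥ := by
  rw [← Subgroup.map_commutator, Subgroup.map_eq_bot_iff, QuotientGroup.ker_mk']

lemma commutator_sup_left_le {A B C K : Subgroup G} [K.Normal]
    (hA : ⁅A, C⁆ ≤ K) (hB : ⁅B, C⁆ ≤ K) : ⁅A ⊔ B, C⁆ ≤ K := by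
  rw [commutator_le_iff_map_bot] at hA hB ⊢
  rw [Subgroup.commutator_eq_bot_iff_le_centralizer] at hA hB ⊢
  rw [Subgroup.map_sup]
  exact sup_le hA hB

/-- Three subgroups lemma relative to a normal subgroup. -/
lemma three_subgroups_le {A B C K : Subgroup G} [K.Normal]
    (h1 : ⁅⁅B, C⁆, A⁆ ≤ K) (h2 : ⁅⁅C, A⁆, B⁆ ≤ K) : ⁅⁅A, B⁆, C⁆ ≤ K := by
  rw [commutator_le_iff_map_bot, Subgroup.map_commutator] at h1 h2 ⊢
  exact Subgroup.commutator_commutator_eq_bot_of_rotate h1 h2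

lemma weightFiltration_normal (N : Subgroup G) (hN : N.Normal) (k : ℕ) :
    (weightFiltration N k).Normal := by
  induction k using Nat.strong_induction_on with
  | _ k ih =>
    match k with
    | 0 => exact (inferInstance : (⊤ : Subgroup G).Normal)
    | 1 =>
      have := hN
      have : (commutator G).Normal := inferInstance
      exact Subgroup.sup_normal _ _
    | (k + 2) =>
      have h1 := ih (k + 1) (by omega)
      have h0 := ih k (by omega)
      have := hN
      have : (⁅(⊤ : Subgroup G), weightFiltration N (k + 1)⁆).Normal :=
        Subgroup.commutator_normal _ _
      have : (⁅N, weightFiltration N k⁆).Normal := Subgroup.commutator_normal _ _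
      exact Subgroup.sup_normal _ _

end Aux

/-- `[WˢG, WᵗG] ≤ W^{s+t}G` for all `s, t ≥ 1`. With 0-based
indexing (`W^{k+1}G = weightFiltration N k`) this reads
`⁅weightFiltration N s, weightFiltration N t⁆ ≤ weightFiltration N (s + t + 1)`. -/
theorem weightFiltration_commutator_le {G : Type*} [Group G]
    (N : Subgroup G) (hN : N.Normal) :
    ∀ s t : ℕ, ⁅weightFiltration N s, weightFiltration N t⁆ ≤
      weightFiltration N (s + t + 1) := by
  have hnorm : ∀ k, (weightFiltration N k).Normal := weightFiltration_normal N hN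
  -- `⁅N, W t⁆ ≤ W (t+2)` holds by definition.
  have hNW : ∀ t, ⁅N, weightFiltration N t⁆ ≤ weightFiltration N (t + 2) := fun t =>
    le_sup_right.trans (le_of_eq rfl)
  -- base: `⁅⊤, W t⁆ ≤ W (t+1)`
  have hTop : ∀ t, ⁅(⊤ : Subgroup G), weightFiltration N t⁆ ≤ weightFiltration N (t + 1) := by
    intro t
    match t with
    | 0 =>
      have : ⁅(⊤ : Subgroup G), weightFiltration N 0⁆ = commutator G := rfl
      rw [this]
      exact le_sup_right
    | (t + 1) => exact le_sup_left
  -- strong induction on s, for all t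
  intro s
  induction s using Nat.strong_induction_on with
  | _ s ih =>
    intro t
    haveI := hnorm t
    haveI := hnorm (s + t + 1)
    match s with
    | 0 => exact (hTop t).trans (le_of_eq (congrArg (weightFiltration N) (by omega)))
    | 1 =>
      rw [show (1 + t + 1) = t + 2 from by omega]
      show ⁅N ⊔ commutator G, weightFiltration N t⁆ ≤ weightFiltration N (t + 2)
      apply commutator_sup_left_le
      · exact hNW t
      · -- ⁅⁅⊤,⊤⁆, W t⁆ ≤ W (t+2)
        have : (commutator G) = ⁅(⊤ : Subgroup G), (⊤ : Subgroup G)⁆ := rfl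
        rw [this]
        apply three_subgroups_le
        · -- ⁅⁅⊤, W t⁆, ⊤⁆ ≤ W (t+2)
          haveI := hnorm (t + 1)
          calc ⁅⁅(⊤ : Subgroup G), weightFiltration N t⁆, (⊤ : Subgroup G)⁆
              ≤ ⁅weightFiltration N (t + 1), (⊤ : Subgroup G)⁆ :=
                Subgroup.commutator_mono (hTop t) le_rfl
            _ = ⁅(⊤ : Subgroup G), weightFiltration N (t + 1)⁆ := Subgroup.commutator_comm _ _
            _ ≤ weightFiltration N (t + 2) := hTop (t + 1)
        · calc ⁅⁅weightFiltration N t, (⊤ : Subgroup G)⁆, (⊤ : Subgroup G)⁆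
              = ⁅⁅(⊤ : Subgroup G), weightFiltration N t⁆, (⊤ : Subgroup G)⁆ := by
                rw [Subgroup.commutator_comm (weightFiltration N t)]
            _ ≤ ⁅weightFiltration N (t + 1), (⊤ : Subgroup G)⁆ :=
                Subgroup.commutator_mono (hTop t) le_rfl
            _ = ⁅(⊤ : Subgroup G), weightFiltration N (t + 1)⁆ := Subgroup.commutator_comm _ _
            _ ≤ weightFiltration N (t + 2) := hTop (t + 1)
    | (k + 2) =>
      show ⁅⁅(⊤ : Subgroup G), weightFiltration N (k + 1)⁆ ⊔ ⁅N, weightFiltration N k⁆,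
          weightFiltration N t⁆ ≤ weightFiltration N (k + 2 + t + 1)
      haveI := hnorm (k + 1)
      haveI := hnorm k
      haveI := hnorm (k + 2 + t + 1)
      apply commutator_sup_left_le
      · -- ⁅⁅⊤, W (k+1)⁆, W t⁆
        apply three_subgroups_le
        · -- ⁅⁅W (k+1), W t⁆, ⊤⁆
          calc ⁅⁅weightFiltration N (k + 1), weightFiltration N t⁆, (⊤ : Subgroup G)⁆
              ≤ ⁅weightFiltration N (k + 1 + t + 1), (⊤ : Subgroup G)⁆ :=
                Subgroup.commutator_mono (ih (k + 1) (by omega) t) le_rfl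
            _ = ⁅(⊤ : Subgroup G), weightFiltration N (k + 1 + t + 1)⁆ :=
                Subgroup.commutator_comm _ _
            _ ≤ weightFiltration N (k + 1 + t + 2) := hTop _
            _ = weightFiltration N (k + 2 + t + 1) := congrArg (weightFiltration N) (by omega)
        · -- ⁅⁅W t, ⊤⁆, W (k+1)⁆
          calc ⁅⁅weightFiltration N t, (⊤ : Subgroup G)⁆, weightFiltration N (k + 1)⁆
              = ⁅⁅(⊤ : Subgroup G), weightFiltration N t⁆, weightFiltration N (k + 1)⁆ := by
                rw [Subgroup.commutator_comm (weightFiltration N t)]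
            _ ≤ ⁅weightFiltration N (t + 1), weightFiltration N (k + 1)⁆ :=
                Subgroup.commutator_mono (hTop t) le_rfl
            _ = ⁅weightFiltration N (k + 1), weightFiltration N (t + 1)⁆ :=
                Subgroup.commutator_comm _ _
            _ ≤ weightFiltration N (k + 1 + (t + 1) + 1) := ih (k + 1) (by omega) (t + 1)
            _ = weightFiltration N (k + 2 + t + 1) := congrArg (weightFiltration N) (by omega)
      · -- ⁅⁅N, W k⁆, W t⁆
        apply three_subgroups_le
        · -- ⁅⁅W k, W t⁆, N⁆
          calc ⁅⁅weightFiltration N k, weightFiltration N t⁆, N⁆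
              ≤ ⁅weightFiltration N (k + t + 1), N⁆ :=
                Subgroup.commutator_mono (ih k (by omega) t) le_rfl
            _ = ⁅N, weightFiltration N (k + t + 1)⁆ := Subgroup.commutator_comm _ _
            _ ≤ weightFiltration N (k + t + 1 + 2) := hNW _
            _ = weightFiltration N (k + 2 + t + 1) := congrArg (weightFiltration N) (by omega)
        · -- ⁅⁅W t, N⁆, W k⁆
          calc ⁅⁅weightFiltration N t, N⁆, weightFiltration N k⁆
              = ⁅⁅N, weightFiltration N t⁆, weightFiltration N k⁆ := by
                rw [Subgroup.commutator_comm (weightFiltration N t)]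
            _ ≤ ⁅weightFiltration N (t + 2), weightFiltration N k⁆ :=
                Subgroup.commutator_mono (hNW t) le_rfl
            _ = ⁅weightFiltration N k, weightFiltration N (t + 2)⁆ :=
                Subgroup.commutator_comm _ _
            _ ≤ weightFiltration N (k + (t + 2) + 1) := ih k (by omega) (t + 2)
            _ = weightFiltration N (k + 2 + t + 1) := congrArg (weightFiltration N) (by omega)
end
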